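/- arXiv:1005.1984 — 3 statements merged into one kernel-verified Lean document; each statement's English description precedes it below -/
import Mathlib

section
/- The only rational solution (x, y, z) ∈ ℚ³ of the equation 2y² = x⁴ − 17z⁴ is (0, 0, 0); in other words, the Reichardt–Lind curve has no rational point. -/
-- 2 is not a 4th power times square nonsense mod 17
example : ∀ a w : ZMod 17, w * w ≠ 0 → 2 * (w * w) ^ 2 ≠ a ^ 4 := by decide

-- product of primes each square mod 17 is square mod 17
lemma RL.sq_of_factors (n : ℕ) (h : ∀ p : ℕ, p.Prime → p ∣ n → IsSquare ((p : ZMod 17))) :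
    IsSquare ((n : ZMod 17)) := by
  induction n using Nat.strong_induction_on with
  | _ n ih =>
    rcases eq_or_ne n 0 with rfl | h0
    · exact ⟨0, by simp⟩
    rcases eq_or_ne n 1 with rfl | h1
    · exact ⟨1, by simp⟩
    obtain ⟨p, hp, hd⟩ := Nat.exists_prime_and_dvd h1
    obtain ⟨m, rfl⟩ := hd
    have hm0 : m ≠ 0 := by rintro rfl; simp at h0
    have hlt : m < p * m := lt_mul_left (Nat.pos_of_ne_zero hm0) hp.one_lt
    have h1' := h p hp ⟨m, rfl⟩
    have h2' := ih m hlt fun q hq hqd => h q hq (hqd.mul_left p)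
    push_cast
    exact h1'.mul h2'

lemma RL.two_sq : (2 : ZMod 17) = 6 * 6 := by decide
lemma RL.sixteen : (16 : ZMod 17) = -1 := by decide
lemma RL.seventeen : (17 : ZMod 17) = 0 := by decide
lemma RL.no4th : ∀ a w : ZMod 17, w * w ≠ 0 → 2 * (w * w) ^ 2 ≠ a ^ 4 := by decide

lemma RL.prime_dvd_of_isCoprime {X Z : ℤ} (p : ℕ) (hp : p.Prime) (hco : IsCoprime X Z)
    (hX : (p : ℤ) ∣ X) (hZ : (p : ℤ) ∣ Z) : False := by
  obtain ⟨a, b, hab⟩ := hco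
  have : (p : ℤ) ∣ 1 := by
    rw [← hab]
    exact dvd_add (Dvd.dvd.mul_left hX a) (Dvd.dvd.mul_left hZ b)
  have := Int.le_of_dvd one_pos this
  have := hp.two_le
  omega

lemma RL.key (X Y Z : ℤ) (hco : IsCoprime X Z) (h : 2 * Y ^ 2 = X ^ 4 - 17 * Z ^ 4) :
    False := by
  have h17 : Nat.Prime 17 := by norm_num
  haveI : Fact (Nat.Prime 17) := ⟨h17⟩
  have h17' : Prime (17 : ℤ) := Nat.prime_iff_prime_int.mp h17
  -- Y ≠ 0
  have hY0 : Y ≠ 0 := by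
    rintro rfl
    have hXZ : X ^ 4 = 17 * Z ^ 4 := by linarith
    have h17X : (17 : ℤ) ∣ X := h17'.dvd_of_dvd_pow (by rw [hXZ]; exact ⟨Z ^ 4, rfl⟩)
    obtain ⟨x, rfl⟩ := h17X
    have hZ4 : Z ^ 4 = 17 * (17 ^ 2 * x ^ 4) := by ring_nf; ring_nf at hXZ; linarith
    have h17Z : (17 : ℤ) ∣ Z := h17'.dvd_of_dvd_pow (n := 4) ⟨17 ^ 2 * x ^ 4, hZ4⟩
    exact RL.prime_dvd_of_isCoprime 17 h17 hco ⟨x, rfl⟩ h17Z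
  -- 17 ∤ Y
  have hY17 : ¬ (17 : ℤ) ∣ Y := by
    intro hdvd
    obtain ⟨y, rfl⟩ := hdvd
    have h17X : (17 : ℤ) ∣ X := by
      apply h17'.dvd_of_dvd_pow (n := 4)
      have : X ^ 4 = 17 * (2 * 17 * y ^ 2 + Z ^ 4) := by ring_nf; ring_nf at h; linarith
      exact ⟨_, this⟩
    obtain ⟨x, rfl⟩ := h17X
    have h17Z : (17 : ℤ) ∣ Z := by
      apply h17'.dvd_of_dvd_pow (n := 4)
      have : Z ^ 4 = 17 * (17 ^ 2 * x ^ 4 - 2 * y ^ 2) := by ring_nf; ring_nf at h; linarith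
      exact ⟨_, this⟩
    exact RL.prime_dvd_of_isCoprime 17 h17 hco ⟨x, rfl⟩ h17Z
  -- every prime factor of Y is a square mod 17
  have hfac : ∀ p : ℕ, p.Prime → p ∣ Y.natAbs → IsSquare ((p : ZMod 17)) := by
    intro p hp hpY
    haveI : Fact (Nat.Prime p) := ⟨hp⟩
    have hpY' : (p : ℤ) ∣ Y := Int.dvd_natAbs.mp (Int.natCast_dvd_natCast.mpr hpY)
    rcases eq_or_ne p 2 with rfl | hp2
    · have : ((2 : ℕ) : ZMod 17) = 2 := by norm_cast
      rw [this]
      exact ⟨6, RL.two_sq⟩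
    rcases eq_or_ne p 17 with rfl | hp17
    · exact absurd hpY' hY17
    -- p ∤ Z
    have hpZ : ¬ (p : ℤ) ∣ Z := by
      intro hpZ
      have hpX : (p : ℤ) ∣ X := by
        apply (Nat.prime_iff_prime_int.mp hp).dvd_of_dvd_pow (n := 4)
        have : X ^ 4 = 2 * Y ^ 2 + 17 * Z ^ 4 := by linarith
        rw [this]
        exact dvd_add (Dvd.dvd.mul_left (dvd_pow hpY' two_ne_zero) 2)
          (Dvd.dvd.mul_left (dvd_pow hpZ (by norm_num)) 17)
      exact RL.prime_dvd_of_isCoprime p hp hco hpX hpZ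
    -- 17 is a square mod p
    have hsq17 : IsSquare ((17 : ZMod p)) := by
      have hZp : (Z : ZMod p) ≠ 0 := by
        rwa [Ne, ZMod.intCast_zmod_eq_zero_iff_dvd]
      have hYp : (Y : ZMod p) = 0 := (ZMod.intCast_zmod_eq_zero_iff_dvd Y p).mpr hpY'
      have heq : ((X : ZMod p)) ^ 4 = 17 * (Z : ZMod p) ^ 4 := by
        have := congrArg (fun t : ℤ => (t : ZMod p)) h
        push_cast at this
        rw [hYp] at this
        ring_nf at this ⊢
        linear_combination -this
      refine ⟨(X : ZMod p) ^ 2 * ((Z : ZMod p) ^ 2)⁻¹, ?_⟩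
      have hZ2 : ((Z : ZMod p) ^ 2) ≠ 0 := pow_ne_zero 2 hZp
      field_simp
      linear_combination -heq
    -- quadratic reciprocity
    have := (ZMod.exists_sq_eq_prime_iff_of_mod_four_eq_one (p := 17) (q := p)
      (by norm_num) hp2).mpr
    have h17p : IsSquare (((17 : ℕ) : ZMod p)) := by exact_mod_cast hsq17
    exact this (by exact_mod_cast h17p)
  -- Y is a square mod 17
  have hYsq : IsSquare ((Y : ZMod 17)) := by
    have habs := RL.sq_of_factors Y.natAbs hfac
    obtain ⟨w, hw⟩ := habs
    rcases Int.natAbs_eq Y with hY | hY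
    · refine ⟨w, ?_⟩
      rw [hY, Int.cast_natCast, hw]
    · refine ⟨4 * w, ?_⟩
      rw [hY, Int.cast_neg, Int.cast_natCast, hw]
      have h16 : (16 : ZMod 17) = -1 := RL.sixteen
      linear_combination (-(w * w)) * h16
  have hYne : (Y : ZMod 17) ≠ 0 := by
    rwa [Ne, ZMod.intCast_zmod_eq_zero_iff_dvd]
  obtain ⟨w, hw⟩ := hYsq
  have heq17 : 2 * ((w : ZMod 17) * w) ^ 2 = (X : ZMod 17) ^ 4 := by
    have := congrArg (fun t : ℤ => (t : ZMod 17)) h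
    push_cast at this
    rw [hw] at this
    rw [RL.seventeen] at this
    linear_combination this
  exact RL.no4th _ w (hw ▸ hYne) heq17

lemma RL.prime_sq_dvd {p : ℕ} (hp : p.Prime) {Y : ℤ} (h : (p : ℤ) ^ 4 ∣ 2 * Y ^ 2) :
    (p : ℤ) ^ 2 ∣ Y := by
  have hp' : Prime (p : ℤ) := Nat.prime_iff_prime_int.mp hp
  -- first: p ^ 3 ∣ Y ^ 2
  have h3 : (p : ℤ) ^ 3 ∣ Y ^ 2 := by
    rcases eq_or_ne p 2 with rfl | hp2
    · obtain ⟨k, hk⟩ := h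
      refine ⟨k, ?_⟩
      have : (2 : ℤ) * Y ^ 2 = 2 * (2 ^ 3 * k) := by rw [hk]; ring
      exact mul_left_cancel₀ (by norm_num) this
    · have hcop : IsCoprime ((p : ℤ) ^ 3) 2 := by
        refine (IsCoprime.pow_left ?_)
        rw [Int.isCoprime_iff_gcd_eq_one, show ((2:ℤ)) = ((2:ℕ):ℤ) by norm_num,
          Int.gcd_natCast_natCast]
        exact (Nat.coprime_primes hp Nat.prime_two).mpr hp2
      exact hcop.dvd_of_dvd_mul_left ((pow_dvd_pow _ (by norm_num)).trans h)
  have hpY : (p : ℤ) ∣ Y := hp'.dvd_of_dvd_pow (dvd_trans (dvd_pow_self _ (by norm_num)) h3)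
  obtain ⟨m, rfl⟩ := hpY
  obtain ⟨k, hk⟩ := h3
  have hm : (p : ℤ) ∣ m := by
    apply hp'.dvd_of_dvd_pow (n := 2)
    refine ⟨k, ?_⟩
    have : (p : ℤ) ^ 2 * m ^ 2 = (p : ℤ) ^ 2 * ((p : ℤ) * k) := by
      rw [show ((p:ℤ))^2 * ((p:ℤ)*k) = (p:ℤ)^3 * k by ring, ← hk]; ring
    exact mul_left_cancel₀ (pow_ne_zero 2 (by exact_mod_cast hp.ne_zero)) this
  obtain ⟨l, rfl⟩ := hm
  exact ⟨l, by ring⟩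

lemma RL.int_version (n : ℕ) : ∀ X Y Z : ℤ, X.natAbs + Z.natAbs = n →
    2 * Y ^ 2 = X ^ 4 - 17 * Z ^ 4 → X = 0 ∧ Y = 0 ∧ Z = 0 := by
  induction n using Nat.strong_induction_on with
  | _ n ih =>
    intro X Y Z hn h
    by_cases hXZ : X = 0 ∧ Z = 0
    · obtain ⟨rfl, rfl⟩ := hXZ
      refine ⟨rfl, ?_, rfl⟩
      have : Y ^ 2 = 0 := by linarith
      exact pow_eq_zero_iff (n := 2) (by norm_num) |>.mp this
    · exfalso
      rcases eq_or_ne (Int.gcd X Z) 1 with h1 | h1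
      · exact RL.key X Y Z (Int.isCoprime_iff_gcd_eq_one.mpr h1) h
      · obtain ⟨p, hp, hpg⟩ := Nat.exists_prime_and_dvd h1
        have hpX : (p : ℤ) ∣ X := (Int.natCast_dvd_natCast.mpr hpg).trans (Int.gcd_dvd_left X Z)
        have hpZ : (p : ℤ) ∣ Z := (Int.natCast_dvd_natCast.mpr hpg).trans (Int.gcd_dvd_right X Z)
        obtain ⟨x, rfl⟩ := hpX
        obtain ⟨z, rfl⟩ := hpZ
        have hp4 : (p : ℤ) ^ 4 ∣ 2 * Y ^ 2 := by
          rw [h]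
          exact dvd_sub ⟨x ^ 4, by ring⟩ ⟨17 * z ^ 4, by ring⟩
        obtain ⟨y, rfl⟩ := RL.prime_sq_dvd hp hp4
        have hp0 : (p : ℤ) ≠ 0 := by exact_mod_cast hp.ne_zero
        have h' : 2 * y ^ 2 = x ^ 4 - 17 * z ^ 4 := by
          have : (p : ℤ) ^ 4 * (2 * y ^ 2) = (p : ℤ) ^ 4 * (x ^ 4 - 17 * z ^ 4) := by
            ring_nf; ring_nf at h; linarith
          exact mul_left_cancel₀ (pow_ne_zero 4 hp0) this
        -- measure decreases
        have hxz0 : ¬ (x = 0 ∧ z = 0) := by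
          rintro ⟨rfl, rfl⟩
          exact hXZ ⟨mul_zero _, mul_zero _⟩
        have hmeas : x.natAbs + z.natAbs < n := by
          have h2 : p * x.natAbs + p * z.natAbs = n := by
            rw [← hn, Int.natAbs_mul, Int.natAbs_mul, Int.natAbs_natCast]
          have hxz1 : 1 ≤ x.natAbs + z.natAbs := by
            rcases Nat.eq_zero_or_pos (x.natAbs + z.natAbs) with h0 | h0
            · exfalso
              apply hxz0
              constructor <;> [skip; skip] <;>
                (rw [← Int.natAbs_eq_zero]; omega)
            · exact h0
          have := hp.two_le
          nlinarith
        obtain ⟨rfl, rfl, rfl⟩ := ih _ hmeas x y z rfl h'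
        exact hxz0 ⟨rfl, rfl⟩

lemma RL.num_eq (x : ℚ) : (x.num : ℚ) = x * x.den := by
  have hden : (x.den : ℚ) ≠ 0 := by exact_mod_cast x.den_ne_zero
  rw [← div_eq_iff hden]
  exact Rat.num_div_den x

/-- Theorem of Lind and Reichardt: the Reichardt–Lind curve `2y² = x⁴ − 17z⁴`
has no rational point. -/
theorem reichardt_lind_no_rational_point :
    ∀ x y z : ℚ, 2 * y ^ 2 = x ^ 4 - 17 * z ^ 4 → x = 0 ∧ y = 0 ∧ z = 0 := by
  intro x y z h
  set d : ℚ := ((x.den : ℚ) * (z.den : ℚ)) with hd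
  have hxden : (x.den : ℚ) ≠ 0 := by exact_mod_cast x.den_ne_zero
  have hzden : (z.den : ℚ) ≠ 0 := by exact_mod_cast z.den_ne_zero
  have hd0 : d ≠ 0 := mul_ne_zero hxden hzden
  set X : ℤ := x.num * z.den with hXdef
  set Z : ℤ := z.num * x.den with hZdef
  have hX : ((X : ℤ) : ℚ) = x * d := by
    rw [hXdef, hd]
    push_cast
    rw [RL.num_eq x]
    ring
  have hZ : ((Z : ℤ) : ℚ) = z * d := by
    rw [hZdef, hd]
    push_cast
    rw [RL.num_eq z]
    ring
  set t : ℚ := y * d ^ 2 with htdef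
  set N : ℤ := X ^ 4 - 17 * Z ^ 4 with hNdef
  have ht2 : 2 * t ^ 2 = (N : ℚ) := by
    rw [htdef, hNdef]
    push_cast
    rw [hX, hZ]
    linear_combination (d ^ 4) * h
  -- t is an integer
  have htden : t.den = 1 := by
    have htd : (t.den : ℚ) ≠ 0 := by exact_mod_cast t.den_ne_zero
    have key : 2 * t.num ^ 2 = N * (t.den : ℤ) ^ 2 := by
      have h1 : 2 * (t.num : ℚ) ^ 2 = (N : ℚ) * (t.den : ℚ) ^ 2 := by
        rw [RL.num_eq t]
        linear_combination ((t.den : ℚ) ^ 2) * ht2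
      exact_mod_cast h1
    have habs : ((t.num.natAbs : ℤ)) ^ 2 = t.num ^ 2 := by
      rw [sq, ← Int.natCast_mul, Int.natAbs_mul_self, sq]
    have hdvd : t.den ^ 2 ∣ 2 * t.num.natAbs ^ 2 := by
      have hzd : ((t.den ^ 2 : ℕ) : ℤ) ∣ ((2 * t.num.natAbs ^ 2 : ℕ) : ℤ) := by
        push_cast
        rw [sq_abs]
        exact ⟨N, by linarith⟩
      exact_mod_cast hzd
    have hcop : (Nat.Coprime (t.den ^ 2) (t.num.natAbs ^ 2)) :=
      Nat.Coprime.pow 2 2 t.reduced.symm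
    have h2 : t.den ^ 2 ∣ 2 := hcop.dvd_of_dvd_mul_right hdvd
    have hle : t.den ^ 2 ≤ 2 := Nat.le_of_dvd (by norm_num) h2
    have hpos : 1 ≤ t.den := t.pos
    nlinarith
  have ht : t = (t.num : ℚ) := by
    conv_lhs => rw [← Rat.num_div_den t]
    rw [htden]
    simp
  have hint : 2 * t.num ^ 2 = X ^ 4 - 17 * Z ^ 4 := by
    have hq : ((2 * t.num ^ 2 : ℤ) : ℚ) = ((X ^ 4 - 17 * Z ^ 4 : ℤ) : ℚ) := by
      push_cast
      rw [← ht]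
      rw [hNdef] at ht2
      push_cast at ht2
      linear_combination ht2
    exact_mod_cast hq
  obtain ⟨hX0, hY0, hZ0⟩ := RL.int_version (X.natAbs + Z.natAbs) X t.num Z rfl hint
  have hx : x = 0 := by
    have hxd : x * d = 0 := by rw [← hX, hX0]; norm_num
    exact (mul_eq_zero.mp hxd).resolve_right hd0
  have hz : z = 0 := by
    have hzd2 : z * d = 0 := by rw [← hZ, hZ0]; norm_num
    exact (mul_eq_zero.mp hzd2).resolve_right hd0
  have hy : y = 0 := by
    have ht0 : t = 0 := by rw [ht, hY0]; norm_num
    rw [htdef] at ht0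
    rcases mul_eq_zero.mp ht0 with h' | h'
    · exact h'
    · exact absurd (pow_eq_zero_iff (n := 2) (by norm_num) |>.mp h') hd0
  exact ⟨hx, hy, hz⟩
end

section
/- For every prime number p there exist x, y, z ∈ ℚ_p, not all zero, with 2y² = x⁴ − 17z⁴, and there exist x, y, z ∈ ℝ, not all zero, with 2y² = x⁴ − 17z⁴. -/
lemma RL.norm_int_eq_one {p : ℕ} [Fact p.Prime] {k : ℤ} (h : ¬ (p:ℤ) ∣ k) :
    ‖(k : ℤ_[p])‖ = 1 := by
  rcases lt_or_eq_of_le (PadicInt.norm_le_one (k : ℤ_[p])) with hlt | he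
  · exact absurd ((PadicInt.norm_int_lt_one_iff_dvd k).1 hlt) h
  · exact he

open Polynomial in
lemma RL.hensel_pow {p : ℕ} [Fact p.Prime] (c d : ℤ) (n : ℕ) (a : ZMod p)
    (h1 : (c : ZMod p) * a ^ n + (d : ZMod p) = 0)
    (h2 : (c : ZMod p) * (n : ZMod p) * a ^ (n - 1) ≠ 0) :
    ∃ x : ℤ_[p], (c : ℤ_[p]) * x ^ n + (d : ℤ_[p]) = 0 := by
  haveI : NeZero p := ⟨(Fact.out (p := p.Prime)).ne_zero⟩
  set F : Polynomial ℤ_[p] := C (c:ℤ_[p]) * X ^ n + C (d:ℤ_[p]) with hF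
  have heval : F.eval ((a.val : ℤ) : ℤ_[p]) = ((c * (a.val:ℤ)^n + d : ℤ) : ℤ_[p]) := by
    simp only [hF, eval_add, eval_mul, eval_pow, eval_C, eval_X]
    push_cast; ring
  have hder : F.derivative.eval ((a.val : ℤ):ℤ_[p])
      = ((c * n * (a.val:ℤ)^(n-1) : ℤ) : ℤ_[p]) := by
    simp only [hF, derivative_add, derivative_C_mul, derivative_X_pow, derivative_C,
      add_zero, eval_mul, eval_C, eval_natCast, eval_pow, eval_X]
    push_cast; ring
  have hd1 : ‖F.derivative.eval ((a.val:ℤ):ℤ_[p])‖ = 1 := by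
    rw [hder]
    apply RL.norm_int_eq_one
    rw [← ZMod.intCast_zmod_eq_zero_iff_dvd]
    push_cast
    rw [show ((a.val : ℕ) : ZMod p) = a from ZMod.natCast_rightInverse a]
    exact h2
  have hnorm : ‖F.eval ((a.val:ℤ):ℤ_[p])‖ < ‖F.derivative.eval ((a.val:ℤ):ℤ_[p])‖ ^ 2 := by
    rw [hd1, heval, one_pow]
    rw [PadicInt.norm_int_lt_one_iff_dvd]
    rw [← ZMod.intCast_zmod_eq_zero_iff_dvd]
    push_cast
    rw [show ((a.val : ℕ) : ZMod p) = a from ZMod.natCast_rightInverse a]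
    exact h1
  obtain ⟨z, hz, -⟩ := hensels_lemma hnorm
  refine ⟨z, ?_⟩
  simpa [hF] using hz

lemma RL.mul_nonsquare {p : ℕ} [Fact p.Prime] {a b : ZMod p}
    (ha : a ≠ 0) (hb : b ≠ 0) (hna : ¬IsSquare a) (hnb : ¬IsSquare b) :
    IsSquare (a * b) := by
  apply (quadraticChar_one_iff_isSquare (mul_ne_zero ha hb)).1
  rw [map_mul, quadraticChar_neg_one_iff_not_isSquare.2 hna,
    quadraticChar_neg_one_iff_not_isSquare.2 hnb]
  ring

/-- Branch C: a fourth root of 17 mod p gives a solution. -/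
lemma RL.sol_of_fourth_root {p : ℕ} [Fact p.Prime] (hp2 : p ≠ 2)
    (h2z : (2 : ZMod p) ≠ 0) (h17z : (17 : ZMod p) ≠ 0) {w : ZMod p} (hw : w ^ 4 = 17) :
    ∃ x y z : ℚ_[p], ¬(x = 0 ∧ y = 0 ∧ z = 0) ∧ 2 * y ^ 2 = x ^ 4 - 17 * z ^ 4 := by
  have hwne : w ≠ 0 := by
    intro h; rw [h] at hw; simp at hw; exact h17z hw.symm
  obtain ⟨x, hx⟩ := RL.hensel_pow (p := p) 1 (-17) 4 w
    (by push_cast; rw [hw]; ring)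
    (by push_cast
        exact mul_ne_zero (mul_ne_zero one_ne_zero
          (by rw [show (4:ZMod p) = 2*2 by norm_num]; exact mul_ne_zero h2z h2z))
          (pow_ne_zero _ hwne))
  refine ⟨(x : ℚ_[p]), 0, 1, fun h => by simpa using h.2.2, ?_⟩
  have hq := congrArg (fun t : ℤ_[p] => (t : ℚ_[p])) hx
  push_cast at hq
  simp (config := { failIfUnchanged := false }) only [show ((17:ℤ_[p]):ℚ_[p]) = 17 from rfl,
    show ((2:ℤ_[p]):ℚ_[p]) = 2 from rfl] at hq
  push_cast
  linear_combination -hq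

/-- Branch S2: b⁴ = 17 + 2 y₀² with y₀ ≠ 0 mod p gives a solution. -/
lemma RL.sol_of_quartic_cong {p : ℕ} [Fact p.Prime] (hp2 : p ≠ 2)
    (h2z : (2 : ZMod p) ≠ 0) {b y₀ : ZMod p} (hy0 : y₀ ≠ 0)
    (hb : b ^ 4 = 17 + 2 * y₀ ^ 2) :
    ∃ x y z : ℚ_[p], ¬(x = 0 ∧ y = 0 ∧ z = 0) ∧ 2 * y ^ 2 = x ^ 4 - 17 * z ^ 4 := by
  haveI : NeZero p := ⟨(Fact.out (p := p.Prime)).ne_zero⟩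
  obtain ⟨y, hy⟩ := RL.hensel_pow (p := p) 2 (17 - (b.val : ℤ)^4) 2 y₀
    (by push_cast
        rw [show ((b.val : ℕ) : ZMod p) = b from ZMod.natCast_rightInverse b]
        linear_combination -hb)
    (by push_cast
        simp only [pow_one]
        exact mul_ne_zero (mul_ne_zero h2z h2z) hy0)
  refine ⟨(((b.val : ℤ) : ℤ_[p]) : ℚ_[p]), (y : ℚ_[p]), 1, fun h => by simpa using h.2.2, ?_⟩
  have hq := congrArg (fun t : ℤ_[p] => (t : ℚ_[p])) hy
  push_cast at hq
  simp (config := { failIfUnchanged := false }) only [show ((17:ℤ_[p]):ℚ_[p]) = 17 from rfl,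
    show ((2:ℤ_[p]):ℚ_[p]) = 2 from rfl] at hq
  push_cast
  linear_combination hq

/-- Branch D: t⁴ = -17 mod p gives a solution. -/
lemma RL.sol_of_neg_fourth_root {p : ℕ} [Fact p.Prime] (hp2 : p ≠ 2)
    (h2z : (2 : ZMod p) ≠ 0) (h17z : (17 : ZMod p) ≠ 0) {t : ZMod p} (ht : t ^ 4 = -17) :
    ∃ x y z : ℚ_[p], ¬(x = 0 ∧ y = 0 ∧ z = 0) ∧ 2 * y ^ 2 = x ^ 4 - 17 * z ^ 4 := by
  have htne : t ≠ 0 := by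
    intro h; rw [h] at ht; simp at ht
    exact h17z ht
  have hinv : (t⁻¹ : ZMod p) ≠ 0 := inv_ne_zero htne
  obtain ⟨z, hz⟩ := RL.hensel_pow (p := p) 17 1 4 t⁻¹
    (by push_cast
        field_simp
        linear_combination ht)
    (by push_cast
        exact mul_ne_zero (mul_ne_zero h17z
          (by rw [show (4:ZMod p) = 2*2 by norm_num]; exact mul_ne_zero h2z h2z))
          (pow_ne_zero _ hinv))
  refine ⟨1, 1, (z : ℚ_[p]), fun h => by simpa using h.1, ?_⟩
  have hq := congrArg (fun t : ℤ_[p] => (t : ℚ_[p])) hz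
  push_cast at hq
  simp (config := { failIfUnchanged := false }) only [show ((17:ℤ_[p]):ℚ_[p]) = 17 from rfl,
    show ((2:ℤ_[p]):ℚ_[p]) = 2 from rfl] at hq
  push_cast
  linear_combination hq

lemma RL.exists_pow_four_eq_sq {p : ℕ} [Fact p.Prime]
    (hsn1 : ¬IsSquare (-1 : ZMod p)) {a : ZMod p} (ha : a ≠ 0) :
    ∃ b : ZMod p, b ^ 4 = a ^ 2 := by
  by_cases hsa : IsSquare a
  · obtain ⟨b, hb⟩ := hsa
    exact ⟨b, by rw [show b^4 = (b*b)^2 by ring, ← hb]⟩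
  · obtain ⟨b, hb⟩ := RL.mul_nonsquare (neg_ne_zero.2 one_ne_zero) ha hsn1 hsa
    refine ⟨b, ?_⟩
    rw [show b^4 = (b*b)^2 by ring, ← hb]
    ring

open Polynomial in
lemma RL.exists_four_root_17 : ∃ x : ℤ_[2], x ^ 4 = 17 := by
  have hnp : ‖(2:ℤ_[2])‖ = (2:ℝ)⁻¹ := by
    have := @PadicInt.norm_p 2 _
    simpa using this
  set F : Polynomial ℤ_[2] := X ^ 4 - C 17 with hF
  have heval : F.eval 3 = 64 := by
    simp only [hF, eval_sub, eval_pow, eval_X, eval_C]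
    norm_num
  have hder : F.derivative.eval 3 = 108 := by
    simp only [hF, derivative_sub, derivative_X_pow, derivative_C, sub_zero,
      eval_mul, eval_C, eval_natCast, eval_pow, eval_X]
    norm_num
  have h27 : ‖(27:ℤ_[2])‖ = 1 := by
    have h2 : ¬ ((2:ℕ):ℤ) ∣ (27:ℤ) := by norm_num
    have h := RL.norm_int_eq_one (p := 2) h2
    simpa using h
  have hnorm : ‖F.eval 3‖ < ‖F.derivative.eval 3‖ ^ 2 := by
    rw [heval, hder]
    rw [show (64:ℤ_[2]) = 2 ^ 6 by norm_num, show (108:ℤ_[2]) = 2 ^ 2 * 27 by norm_num]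
    rw [norm_pow, norm_mul, norm_pow, hnp, h27]
    norm_num
  obtain ⟨z, hz, -⟩ := hensels_lemma hnorm
  refine ⟨z, ?_⟩
  have h0 : z ^ 4 - 17 = 0 := by simpa [hF] using hz
  exact sub_eq_zero.1 h0

lemma RL.two_sq_mod17 : IsSquare (2 : ZMod 17) := by decide

/-- If a square root of `-1` is itself a square, then `2` is a square. -/
lemma RL.sq_of_sqrt_neg_one_sq {p : ℕ} [Fact p.Prime] (hp2 : p ≠ 2) {i : ZMod p}
    (hi : i * i = -1) (hsi : IsSquare i) : IsSquare (2 : ZMod p) := by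
  obtain ⟨u, hu⟩ := hsi
  have h2z : (1 : ZMod p) ≠ -1 := by
    intro h
    have hch : ((2:ℕ) : ZMod p) = 0 := by push_cast; linear_combination h
    rw [ZMod.natCast_eq_zero_iff] at hch
    exact hp2 ((Nat.prime_dvd_prime_iff_eq Fact.out (by norm_num)).1 hch)
  have hu4 : u ^ 4 = -1 := by rw [show u^4 = (u*u)*(u*u) by ring, ← hu, hi]
  have hu8 : u ^ 8 = 1 := by rw [show u^8 = (u^4)*(u^4) by ring, hu4]; ring
  have hune : u ≠ 0 := by
    intro h; rw [h] at hu8; simp at hu8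
  have hk8 : orderOf u ∣ 8 := orderOf_dvd_of_pow_eq_one hu8
  have hk4 : ¬ orderOf u ∣ 4 := by
    intro h
    have := orderOf_dvd_iff_pow_eq_one.1 h
    rw [hu4] at this
    exact h2z this.symm
  have hk : orderOf u = 8 := by
    have hle : orderOf u ≤ 8 := Nat.le_of_dvd (by norm_num) hk8
    interval_cases h : orderOf u <;> omega
  have hdvd : (8:ℕ) ∣ p - 1 := hk ▸ ZMod.orderOf_dvd_card_sub_one hune
  have hp1 : 2 ≤ p := (Fact.out (p := p.Prime)).two_le
  have hmod : p % 8 = 1 := by omega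
  exact (ZMod.exists_sq_eq_two_iff hp2).2 (Or.inl hmod)

/-- The Reichardt–Lind curve has points in every completion of ℚ:
nontrivial solutions of `2y² = x⁴ − 17z⁴` exist over every `ℚ_p` and over `ℝ`. -/
theorem reichardt_lind_local_points :
    (∀ (p : ℕ) [Fact p.Prime],
      ∃ x y z : ℚ_[p], ¬(x = 0 ∧ y = 0 ∧ z = 0) ∧
        2 * y ^ 2 = x ^ 4 - 17 * z ^ 4) ∧
    (∃ x y z : ℝ, ¬(x = 0 ∧ y = 0 ∧ z = 0) ∧
      2 * y ^ 2 = x ^ 4 - 17 * z ^ 4) := by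
  constructor
  · intro p hp
    by_cases hp2 : p = 2
    · subst hp2
      obtain ⟨x, hx⟩ := RL.exists_four_root_17
      refine ⟨(x : ℚ_[2]), 0, 1, fun h => by simpa using h.2.2, ?_⟩
      have hx' : ((x : ℚ_[2]))^4 = 17 := by exact_mod_cast congrArg (fun t : ℤ_[2] => (t : ℚ_[2])) hx
      rw [hx']
      norm_num
    -- p odd
    · have hodd : p % 2 = 1 := Nat.odd_iff.1 ((Fact.out (p := p.Prime)).odd_of_ne_two hp2)
      have hpprime : p.Prime := Fact.out
      have h2z : (2 : ZMod p) ≠ 0 := by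
        intro h
        have h' : ((2:ℕ) : ZMod p) = 0 := by exact_mod_cast h
        rw [ZMod.natCast_eq_zero_iff] at h'
        exact hp2 ((Nat.prime_dvd_prime_iff_eq hpprime (by norm_num)).1 h')
      by_cases hs2 : IsSquare (2 : ZMod p)
      · -- branch A : 2 is a square mod p, solution (1, y, 0)
        obtain ⟨r, hr⟩ := hs2
        have key : (2 : ZMod p) * (r * (2:ZMod p)⁻¹) ^ 2 = 1 := by
          field_simp
          linear_combination -hr
        have hy0 : r * (2:ZMod p)⁻¹ ≠ 0 := by
          intro h; rw [h] at key; simp at key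
        obtain ⟨y, hy⟩ := RL.hensel_pow (p := p) 2 (-1) 2 (r * (2:ZMod p)⁻¹)
          (by push_cast; linear_combination key)
          (by push_cast
              simp only [pow_one]
              exact mul_ne_zero (mul_ne_zero h2z h2z) hy0)
        refine ⟨1, (y : ℚ_[p]), 0, fun h => by simpa using h.1, ?_⟩
        have hq := congrArg (fun t : ℤ_[p] => (t : ℚ_[p])) hy
        push_cast at hq
        simp (config := { failIfUnchanged := false }) only
          [show ((17:ℤ_[p]):ℚ_[p]) = 17 from rfl, show ((2:ℤ_[p]):ℚ_[p]) = 2 from rfl] at hq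
        push_cast
        linear_combination hq
      · have hp17 : p ≠ 17 := by
          rintro rfl
          exact hs2 RL.two_sq_mod17
        have h17z : (17 : ZMod p) ≠ 0 := by
          intro h
          have h' : ((17:ℕ) : ZMod p) = 0 := by exact_mod_cast h
          rw [ZMod.natCast_eq_zero_iff] at h'
          exact hp17 ((Nat.prime_dvd_prime_iff_eq hpprime (by norm_num)).1 h')
        by_cases hsn1 : IsSquare (-1 : ZMod p)
        · by_cases hs17 : IsSquare (17 : ZMod p)
          · obtain ⟨s, hs⟩ := hs17
            have hsne : s ≠ 0 := by
              intro h; rw [h] at hs; simp at hs; exact h17z hs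
            by_cases hss : IsSquare s
            · obtain ⟨w, hw⟩ := hss
              refine RL.sol_of_fourth_root hp2 h2z h17z (w := w) ?_
              rw [show w^4 = (w*w)^2 by ring, ← hw, sq, ← hs]
            · by_cases hss' : IsSquare (-s)
              · obtain ⟨w, hw⟩ := hss'
                refine RL.sol_of_fourth_root hp2 h2z h17z (w := w) ?_
                rw [show w^4 = (w*w)^2 by ring, ← hw]
                rw [show (-s)^2 = s*s by ring, ← hs]
              · obtain ⟨i, hi⟩ := hsn1
                have hi' : i * i = -1 := hi.symm
                have hine : i ≠ 0 := by
                  intro h; rw [h] at hi'; simp at hi'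
                have hins : ¬IsSquare i :=
                  fun hsq => hs2 (RL.sq_of_sqrt_neg_one_sq hp2 hi' hsq)
                obtain ⟨t, ht⟩ := RL.mul_nonsquare hine hsne hins hss
                refine RL.sol_of_neg_fourth_root hp2 h2z h17z (t := t) ?_
                have e1 : t^4 = (i*s)^2 := by rw [show t^4 = (t*t)^2 by ring, ← ht]
                rw [e1, show (i*s)^2 = (i*i)*(s*s) by ring, hi', ← hs]
                ring
          · -- 17 not a square : use -34 square
            have h34 : IsSquare ((2:ZMod p) * 17) := RL.mul_nonsquare h2z h17z hs2 hs17
            obtain ⟨r, hr⟩ := hsn1.mul h34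
            have key : (0:ZMod p)^4 = 17 + 2 * (r * (2:ZMod p)⁻¹)^2 := by
              field_simp
              linear_combination hr
            have hy0 : r * (2:ZMod p)⁻¹ ≠ 0 := by
              intro h
              rw [h] at key
              simp at key
              exact h17z (by linear_combination -key)
            exact RL.sol_of_quartic_cong hp2 h2z hy0 key
        · -- -1 not a square mod p
          have hn1z : (-1 : ZMod p) ≠ 0 := neg_ne_zero.2 one_ne_zero
          obtain ⟨dd, hdd⟩ := RL.mul_nonsquare hn1z h2z hsn1 hs2
          have hddne : dd ≠ 0 := by
            intro h; rw [h] at hdd; simp at hdd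
            exact h2z hdd
          obtain ⟨a, w, haw⟩ := ZMod.sq_add_sq p (17 : ZMod p)
          have hw' : w = (w * dd⁻¹) * dd := by field_simp
          have key : a^2 = 17 + 2 * (w * dd⁻¹)^2 := by
            rw [hw'] at haw
            linear_combination haw + ((w * dd⁻¹)^2) * hdd
          by_cases hy0 : w * dd⁻¹ = 0
          · rw [hy0] at key
            simp at key
            have hane : a ≠ 0 := by
              intro h; rw [h] at key; simp at key; exact h17z key.symm
            obtain ⟨b, hb⟩ := RL.exists_pow_four_eq_sq hsn1 hane
            exact RL.sol_of_fourth_root hp2 h2z h17z (w := b) (by rw [hb, key])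
          · by_cases ha : a = 0
            · refine RL.sol_of_quartic_cong hp2 h2z hy0 (b := 0) ?_
              rw [← key, ha]
              ring
            · obtain ⟨b, hb⟩ := RL.exists_pow_four_eq_sq hsn1 ha
              exact RL.sol_of_quartic_cong hp2 h2z hy0 (hb.trans key)
  · refine ⟨Real.sqrt 2, Real.sqrt 2, 0, ?_, ?_⟩
    · intro h
      have := h.1
      have h2 : (0:ℝ) < Real.sqrt 2 := Real.sqrt_pos.2 (by norm_num)
      rw [this] at h2; exact lt_irrefl _ h2
    · have h2 : Real.sqrt 2 ^ 2 = 2 := Real.sq_sqrt (by norm_num)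
      rw [show Real.sqrt 2 ^ 4 = (Real.sqrt 2 ^ 2) ^ 2 by ring, h2]
      norm_num
end

section
/- Let K be a number field whose degree [K : ℚ] is odd. Then the only solution (x, y, z) ∈ K³ of the equation x⁴ − 17z⁴ = 2(y² + 4z²)² is (0, 0, 0). -/
open Polynomial IntermediateField

/- Auxiliary facts -/

instance fact17 : Fact (Nat.Prime 17) := ⟨by norm_num⟩




lemma sq_ne_two (q : ℚ) : q ^ 2 ≠ 2 := by
  intro h
  have h2 : ((Real.sqrt 2 : ℝ)) = |(q : ℝ)| := by
    rw [← Real.sqrt_sq (abs_nonneg (q:ℝ)), sq_abs]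
    rw [show ((q:ℝ)^2) = ((q^2 : ℚ) : ℝ) by push_cast; ring, h]
    norm_num
  exact irrational_sqrt_two (h2 ▸ ⟨|q|, by push_cast; rfl⟩)

lemma zmod17_no : ∀ u v : ZMod 17, IsSquare u → v ≠ 0 → 2 * u ^ 2 ≠ v ^ 4 := by decide



lemma legendre_two : legendreSym 17 2 = 1 := by
  rw [legendreSym.eq_one_iff 17 (by decide)]
  exact ⟨6, by decide⟩

lemma legendre_neg_one : legendreSym 17 (-1) = 1 := by
  rw [legendreSym.eq_one_iff 17 (by decide)]
  exact ⟨4, by decide⟩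

lemma legendre_aux : ∀ m : ℕ, m ≠ 0 →
    (∀ p : ℕ, p.Prime → p ∣ m → legendreSym 17 (p : ℤ) = 1) →
    legendreSym 17 (m : ℤ) = 1 := by
  intro m
  induction m using Nat.strong_induction_on with
  | _ m IH =>
    intro hm0 hp
    rcases eq_or_ne m 1 with rfl | hm1
    · exact legendreSym.at_one 17
    · have hpf := Nat.minFac_prime hm1
      obtain ⟨k, hk⟩ := Nat.minFac_dvd m
      have hk0 : k ≠ 0 := by rintro rfl; simp at hk; exact hm0 hk
      have hklt : k < m := by
        have h2 : 2 ≤ m.minFac := hpf.two_le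
        have hk1 : k ≥ 1 := Nat.one_le_iff_ne_zero.mpr hk0
        nlinarith [hk]
      have hcast : ((m : ℤ)) = (m.minFac : ℤ) * (k : ℤ) := by exact_mod_cast hk
      rw [hcast, legendreSym.mul]
      rw [hp _ hpf (Nat.minFac_dvd m),
        IH k hklt hk0 (fun q hq hqk => hp q hq (hqk.trans (by rw [hk]; exact dvd_mul_left k m.minFac)))]
      norm_num



lemma lind_int (n d w : ℤ) (cop : n.natAbs.Coprime d.natAbs)
    (heq : 2 * w ^ 2 = n ^ 4 - 17 * d ^ 4) : False := by
  have p17 : Prime (17 : ℤ) := by norm_num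
  -- 17 does not divide w
  have h17w : ¬ (17 : ℤ) ∣ w := by
    intro ⟨k, hk⟩
    have hn4 : (17 : ℤ) ∣ n ^ 4 := by
      refine ⟨2 * 17 * k ^ 2 + d ^ 4, ?_⟩
      rw [show n ^ 4 = 2 * w ^ 2 + 17 * d ^ 4 by linarith, hk]; ring
    have h17n : (17 : ℤ) ∣ n := p17.dvd_of_dvd_pow hn4
    obtain ⟨j, hj⟩ := h17n
    have hd4 : (17 : ℤ) ∣ d ^ 4 := by
      have : (17 : ℤ) * d ^ 4 = 17 * 17 * (17 * 17 * j ^ 4 - 2 * k ^ 2) := by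
        rw [show (17:ℤ) * d ^ 4 = n ^ 4 - 2 * w ^ 2 by linarith, hj, hk]; ring
      exact ⟨17 * 17 * j ^ 4 - 2 * k ^ 2, by linarith⟩
    have h17d : (17 : ℤ) ∣ d := p17.dvd_of_dvd_pow hd4
    have hna : (17 : ℕ) ∣ n.natAbs := by
      rw [← Int.natAbs_natCast 17]; exact Int.natAbs_dvd_natAbs.mpr (hj ▸ ⟨j, rfl⟩)
    have hda : (17 : ℕ) ∣ d.natAbs := by
      rw [← Int.natAbs_natCast 17]; exact Int.natAbs_dvd_natAbs.mpr h17d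
    have : (17 : ℕ) ∣ 1 := cop ▸ Nat.dvd_gcd hna hda
    norm_num at this
  -- 17 does not divide n
  have h17n : ¬ (17 : ℤ) ∣ n := by
    intro hn
    apply h17w
    have : (17 : ℤ) ∣ 2 * w ^ 2 := by
      rw [heq]
      exact dvd_sub (dvd_pow hn (by norm_num)) ⟨d ^ 4, by ring⟩
    rcases (Prime.dvd_mul p17).mp this with h | h
    · norm_num at h
    · exact p17.dvd_of_dvd_pow h
  -- w ≠ 0
  have hw0 : w ≠ 0 := by
    rintro rfl
    exact h17n (p17.dvd_of_dvd_pow (n := 4) ⟨d ^ 4, by linarith⟩)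
  -- each prime factor p of w has (p|17) = 1
  have hkey : ∀ p : ℕ, p.Prime → p ∣ w.natAbs → legendreSym 17 (p : ℤ) = 1 := by
    intro p hpp hpw
    have hpwz : (p : ℤ) ∣ w := by
      exact Int.dvd_natAbs.mp (Int.natCast_dvd_natCast.mpr hpw)
    haveI : Fact p.Prime := ⟨hpp⟩
    rcases eq_or_ne p 2 with rfl | hp2
    · exact legendre_two
    have hp17 : p ≠ 17 := by
      rintro rfl
      exact h17w hpwz
    -- p does not divide d
    have hpd : ¬ (p : ℤ) ∣ d := by
      intro hdvd
      have hpint : Prime (p : ℤ) := Nat.prime_iff_prime_int.mp hpp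
      have hn4 : (p : ℤ) ∣ n ^ 4 := by
        rw [show n ^ 4 = 2 * w ^ 2 + 17 * d ^ 4 by linarith]
        exact dvd_add (Dvd.dvd.mul_left (dvd_pow hpwz (by norm_num)) 2)
          (Dvd.dvd.mul_left (dvd_pow hdvd (by norm_num)) 17)
      have hpn : (p : ℤ) ∣ n := hpint.dvd_of_dvd_pow hn4
      have : (p : ℕ) ∣ 1 := cop ▸ Nat.dvd_gcd
        (by rw [← Int.natAbs_natCast p]; exact Int.natAbs_dvd_natAbs.mpr hpn)
        (by rw [← Int.natAbs_natCast p]; exact Int.natAbs_dvd_natAbs.mpr hdvd)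
      exact Nat.Prime.one_lt hpp |>.ne' (Nat.dvd_one.mp this)
    -- in ZMod p : n^4 = 17 * d^4
    have hd0 : (d : ZMod p) ≠ 0 := by
      rw [Ne, ZMod.intCast_zmod_eq_zero_iff_dvd]
      exact hpd
    have hweq : ((w : ZMod p)) = 0 := (ZMod.intCast_zmod_eq_zero_iff_dvd w p).mpr hpwz
    have hmod : ((n : ZMod p)) ^ 4 = 17 * ((d : ZMod p)) ^ 4 := by
      have := congrArg (Int.cast : ℤ → ZMod p) heq
      push_cast at this
      rw [hweq] at this
      ring_nf at this ⊢
      linear_combination -this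
    have hsq : IsSquare ((17 : ℤ) : ZMod p) := by
      refine ⟨((n : ZMod p) * (d : ZMod p)⁻¹) ^ 2, ?_⟩
      push_cast
      field_simp
      linear_combination -hmod
    have h17p : legendreSym p 17 = 1 :=
      (legendreSym.eq_one_iff p (by
        rw [Ne, ZMod.intCast_zmod_eq_zero_iff_dvd]
        intro hdvd
        have := Int.natCast_dvd_natCast.mp (by exact_mod_cast hdvd : (p : ℤ) ∣ (17 : ℕ))
        exact hp17 ((Nat.prime_dvd_prime_iff_eq hpp (by norm_num)).mp this))).mpr hsq
    rw [← legendreSym.quadratic_reciprocity_one_mod_four (by norm_num) hp2]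
    exact h17p
  -- legendreSym 17 w = 1
  have hwa0 : w.natAbs ≠ 0 := fun h => hw0 (Int.natAbs_eq_zero.mp h)
  have hla : legendreSym 17 ((w.natAbs : ℤ)) = 1 := legendre_aux w.natAbs hwa0 hkey
  have hlw : legendreSym 17 w = 1 := by
    rcases Int.natAbs_eq w with h | h
    · rw [h] at hla ⊢; exact hla
    · rw [h, show -(w.natAbs : ℤ) = -1 * (w.natAbs : ℤ) by ring, legendreSym.mul,
        legendre_neg_one, hla]
      norm_num
  have hwsq : IsSquare ((w : ZMod 17)) := by
    refine (legendreSym.eq_one_iff 17 ?_).mp hlw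
    rw [Ne, ZMod.intCast_zmod_eq_zero_iff_dvd]
    exact h17w
  have hn0 : ((n : ZMod 17)) ≠ 0 := by
    rw [Ne, ZMod.intCast_zmod_eq_zero_iff_dvd]
    exact h17n
  have hmod17 : (2 : ZMod 17) * (w : ZMod 17) ^ 2 = (n : ZMod 17) ^ 4 := by
    have := congrArg (Int.cast : ℤ → ZMod 17) heq
    push_cast at this
    rw [show ((17 : ZMod 17)) = 0 by decide] at this
    linear_combination this
  exact zmod17_no _ _ hwsq hn0 hmod17

lemma lind (a b : ℚ) (h : 2 * b ^ 2 = a ^ 4 - 17) : False := by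
  have hd0 : ((a.den : ℚ)) ≠ 0 := by
    exact_mod_cast a.den_ne_zero
  have ha : a = (a.num : ℚ) / (a.den : ℚ) := (Rat.num_div_den a).symm
  -- key polynomial identity
  have key : (2 * b * (a.den : ℚ) ^ 2) ^ 2
      = ((2 * a.num ^ 4 - 34 * (a.den : ℤ) ^ 4 : ℤ) : ℚ) := by
    push_cast
    rw [ha] at h
    field_simp at h
    linear_combination 2 * h
  -- the square root of an integer is an integer
  have hint : IsIntegral ℤ (2 * b * (a.den : ℚ) ^ 2) := by
    refine ⟨Polynomial.X ^ 2 - Polynomial.C (2 * a.num ^ 4 - 34 * (a.den : ℤ) ^ 4),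
      Polynomial.monic_X_pow_sub_C _ (by norm_num), ?_⟩
    rw [← Polynomial.aeval_def, map_sub, map_pow, Polynomial.aeval_X, Polynomial.aeval_C,
      sub_eq_zero, key, eq_intCast]
  obtain ⟨m, hm⟩ := IsIntegrallyClosed.isIntegral_iff.mp hint
  have hm2 : m ^ 2 = 2 * a.num ^ 4 - 34 * (a.den : ℤ) ^ 4 := by
    have : ((m : ℚ)) ^ 2 = ((2 * a.num ^ 4 - 34 * (a.den : ℤ) ^ 4 : ℤ) : ℚ) := by
      rw [show ((m:ℤ):ℚ) = algebraMap ℤ ℚ m from rfl, hm]; exact key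
    exact_mod_cast this
  have h2m : (2 : ℤ) ∣ m := by
    exact Int.prime_two.dvd_of_dvd_pow (n := 2)
      ⟨a.num ^ 4 - 17 * (a.den : ℤ) ^ 4, by linarith⟩
  obtain ⟨w, rfl⟩ := h2m
  refine lind_int a.num (a.den : ℤ) w ?_ (by nlinarith [hm2])
  simpa using a.reduced

lemma lemB : ∀ d : ℕ, Odd d → ∀ h p : ℚ[X], h.Monic → h.natDegree = d →
    h ∣ (X ^ 4 - C 17 - 2 * p ^ 2) → False := by
  intro d
  induction d using Nat.strong_induction_on with
  | _ d IH =>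
    intro hodd h p hmon hdeg hdvd
    -- reduce p modulo h
    set p' := p %ₘ h with hp'def
    have hpp' : h ∣ (p - p') := ⟨p /ₘ h, by
      have := modByMonic_add_div p h
      linear_combination -this⟩
    have hdvd' : h ∣ (X ^ 4 - C 17 - 2 * p' ^ 2) := by
      have hiden : (X ^ 4 - C 17 - 2 * p' ^ 2)
          = (X ^ 4 - C 17 - 2 * p ^ 2) + 2 * ((p - p') * (p + p')) := by ring
      rw [hiden]
      exact dvd_add hdvd ((hpp'.mul_right (p + p')).mul_left 2)
    rcases eq_or_ne d 1 with rfl | hd1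
    -- base case : degree 1
    · have hh : h = X + C (h.coeff 0) := hmon.eq_X_add_C hdeg
      set c : ℚ := -h.coeff 0 with hc
      obtain ⟨g, hg⟩ := hdvd'
      have hev : c ^ 4 - 17 - 2 * (p'.eval c) ^ 2 = 0 := by
        have := congrArg (eval c) hg
        simp only [eval_mul, eval_sub, eval_pow, eval_X, eval_C, eval_ofNat, eval_add] at this
        rw [hh] at this
        simp only [eval_add, eval_X, eval_C] at this
        rw [show c + h.coeff 0 = 0 by rw [hc]; ring] at this
        simpa using this
      exact lind c (p'.eval c) (by linarith)
    -- inductive step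
    · have hd3 : 3 ≤ d := by
        rcases hodd with ⟨k, rfl⟩
        omega
      have hdegp' : p'.natDegree < d := by
        rcases eq_or_ne p' 0 with h0 | h0
        · rw [h0]; simpa using Nat.lt_of_lt_of_le (by norm_num) hd3
        · have := degree_modByMonic_lt p hmon
          rw [← hp'def] at this
          rw [← hdeg]
          exact natDegree_lt_natDegree h0 (by rwa [degree_eq_natDegree hmon.ne_zero] at this ⊢)
      set r : ℚ[X] := X ^ 4 - C 17 - 2 * p' ^ 2 with hr
      have hC2 : (2 : ℚ[X]) = C 2 := (map_ofNat C 2).symm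
      have hXC : natDegree (X ^ 4 - C 17 : ℚ[X]) = 4 := natDegree_X_pow_sub_C
      have hrr : r = (X ^ 4 - C 17) - C 2 * p' ^ 2 := by rw [hr, ← hC2]
      have hfacts : r ≠ 0 ∧ Even r.natDegree ∧ r.natDegree ≤ 2 * d - 2 := by
        by_cases he2 : p'.natDegree ≤ 2
        · have h1 : (p' ^ 2).coeff 4 = (p'.coeff 2) ^ 2 := by
            rcases eq_or_ne p'.natDegree 2 with he2' | hne
            · have hnd : (p' ^ 2).natDegree = 4 := by rw [natDegree_pow, he2']
              calc (p' ^ 2).coeff 4 = (p' ^ 2).leadingCoeff := by rw [← hnd]; rfl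
                _ = p'.leadingCoeff ^ 2 := by rw [leadingCoeff_pow]
                _ = (p'.coeff 2) ^ 2 := by rw [leadingCoeff, he2']
            · have helt : p'.natDegree < 2 := by omega
              have hz1 : (p' ^ 2).coeff 4 = 0 := by
                apply coeff_eq_zero_of_natDegree_lt
                rw [natDegree_pow]
                omega
              have hz2 : p'.coeff 2 = 0 := coeff_eq_zero_of_natDegree_lt helt
              rw [hz1, hz2]
              ring
          have hc4 : r.coeff 4 = 1 - 2 * (p'.coeff 2) ^ 2 := by
            rw [hrr]
            simp only [coeff_sub, coeff_C_mul, coeff_X_pow, coeff_C, h1]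
            norm_num
          have hc4ne : r.coeff 4 ≠ 0 := by
            rw [hc4]
            intro h0
            exact sq_ne_two (2 * p'.coeff 2) (by linear_combination -2 * h0)
          have hrle4 : r.natDegree ≤ 4 := by
            rw [hrr]
            refine le_trans (natDegree_sub_le _ _) ?_
            simp only [max_le_iff]
            refine ⟨le_of_eq hXC, ?_⟩
            refine le_trans (natDegree_C_mul_le _ _) ?_
            rw [natDegree_pow]
            omega
          have hrdeg : r.natDegree = 4 := le_antisymm hrle4 (le_natDegree_of_ne_zero hc4ne)
          refine ⟨fun h0 => hc4ne (by rw [h0]; simp), ?_, ?_⟩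
          · rw [hrdeg]; exact ⟨2, by norm_num⟩
          · omega
        · have h2e : (C (2:ℚ) * p' ^ 2).natDegree = 2 * p'.natDegree := by
            rw [natDegree_C_mul (by norm_num : (2:ℚ) ≠ 0), natDegree_pow]
          have hlt : natDegree (X ^ 4 - C 17 : ℚ[X]) < natDegree (C (2:ℚ) * p' ^ 2) := by
            rw [hXC, h2e]
            omega
          have hrdeg : r.natDegree = 2 * p'.natDegree := by
            rw [hrr, natDegree_sub_eq_right_of_natDegree_lt hlt, h2e]
          refine ⟨?_, ?_, ?_⟩
          · intro h0
            rw [h0] at hrdeg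
            simp at hrdeg
            omega
          · rw [hrdeg]; exact ⟨p'.natDegree, by ring⟩
          · omega
      obtain ⟨hr0, hreven, hrle⟩ := hfacts
      have hmod0 : r %ₘ h = 0 := (modByMonic_eq_zero_iff_dvd hmon).mpr hdvd'
      have hrg : r = h * (r /ₘ h) := by
        conv_lhs => rw [← modByMonic_add_div r h]
        rw [hmod0, zero_add]
      set g := r /ₘ h with hgdef
      have hg0 : g ≠ 0 := by
        intro h0
        rw [h0, mul_zero] at hrg
        exact hr0 hrg
      have hdegsum : r.natDegree = d + g.natDegree := by
        rw [hrg, natDegree_mul hmon.ne_zero hg0, hdeg]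
      have hgodd : Odd g.natDegree := by
        rcases hodd with ⟨k, hk⟩
        rcases hreven with ⟨t, ht⟩
        exact ⟨t - d / 2 - 1, by omega⟩
      have hglt : g.natDegree < d := by omega
      have hlcne : g.leadingCoeff ≠ 0 := leadingCoeff_ne_zero.mpr hg0
      have hmon' : (g * C g.leadingCoeff⁻¹).Monic := monic_mul_leadingCoeff_inv hg0
      have hgdvdr : g ∣ r := ⟨h, by rw [hrg]; ring⟩
      have hdvd'' : (g * C g.leadingCoeff⁻¹) ∣ r := by
        refine dvd_trans ?_ hgdvdr
        refine ⟨C g.leadingCoeff, ?_⟩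
        rw [mul_assoc, ← C_mul, inv_mul_cancel₀ hlcne, C_1, mul_one]
      have hdeg'' : (g * C g.leadingCoeff⁻¹).natDegree = g.natDegree := by
        rw [natDegree_mul hg0 (by simpa using inv_ne_zero hlcne), natDegree_C, add_zero]
      exact IH g.natDegree hglt hgodd (g * C g.leadingCoeff⁻¹) p' hmon' hdeg'' (hr ▸ hdvd'')

lemma rational_of_minpoly_natDegree_one {F L : Type*} [Field F] [Field L] [Algebra F L]
    (u : L) (hint : IsIntegral F u) (h1 : (minpoly F u).natDegree = 1) :
    ∃ c : F, algebraMap F L c = u := by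
  have hmon := minpoly.monic hint
  have hXC := hmon.eq_X_add_C h1
  refine ⟨-(minpoly F u).coeff 0, ?_⟩
  have haev := minpoly.aeval F u
  rw [hXC, map_add, aeval_X, aeval_C] at haev
  rw [map_neg]
  linear_combination -haev

-- no square root of 2 in an odd-degree number field
lemma lemD {L : Type*} [Field L] [Algebra ℚ L] [FiniteDimensional ℚ L]
    (hodd : Odd (Module.finrank ℚ L)) (u : L) (h : u ^ 2 = 2) : False := by
  have hint : IsIntegral ℚ u := IsIntegral.of_finite ℚ u
  have hdvd : minpoly ℚ u ∣ (X ^ 2 - C 2) := by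
    apply minpoly.dvd
    rw [map_sub, map_pow, aeval_X, aeval_C, h]
    simp
  have hle : (minpoly ℚ u).natDegree ≤ 2 := by
    have := natDegree_le_of_dvd hdvd (X_pow_sub_C_ne_zero (by norm_num) 2)
    simpa [natDegree_X_pow_sub_C] using this
  have hdvdrank : (minpoly ℚ u).natDegree ∣ Module.finrank ℚ L := by
    rw [← IntermediateField.adjoin.finrank hint]
    exact ⟨Module.finrank ℚ⟮u⟯ L, (Module.finrank_mul_finrank ℚ ℚ⟮u⟯ L).symm⟩
  have hoddm : Odd (minpoly ℚ u).natDegree := by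
    obtain ⟨t, ht⟩ := hdvdrank
    rw [ht, Nat.odd_mul] at hodd
    exact hodd.1
  have h1 : (minpoly ℚ u).natDegree = 1 := by
    rw [Nat.odd_iff] at hoddm
    omega
  obtain ⟨c, hc⟩ := rational_of_minpoly_natDegree_one u hint h1
  apply sq_ne_two c
  apply (algebraMap ℚ L).injective
  rw [map_pow, hc, map_ofNat, h]

lemma lemA {L : Type*} [Field L] [Algebra ℚ L] [FiniteDimensional ℚ L]
    (hodd : Odd (Module.finrank ℚ L)) (α β : L) (heq : 2 * β ^ 2 = α ^ 4 - 17) : False := by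
  haveI : CharZero L := charZero_of_injective_algebraMap (algebraMap ℚ L).injective
  have hαint : IsIntegral ℚ α := IsIntegral.of_finite ℚ α
  set E : IntermediateField ℚ L := ℚ⟮α⟯ with hE
  have htower : Module.finrank ℚ E * Module.finrank E L = Module.finrank ℚ L :=
    Module.finrank_mul_finrank ℚ E L
  have hoddE : Odd (Module.finrank ℚ E) ∧ Odd (Module.finrank E L) := by
    rw [← htower, Nat.odd_mul] at hodd
    exact hodd
  have hαE : α ∈ E := mem_adjoin_simple_self ℚ α
  have hβint : IsIntegral E β := IsIntegral.of_finite E β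
  have hcoe : (algebraMap E L) (⟨α, hαE⟩ : E) = α := rfl
  have hβsq : algebraMap E L ((((⟨α, hαE⟩ : E)) ^ 4 - 17) / 2) = β ^ 2 := by
    rw [map_div₀, map_sub, map_pow, hcoe, map_ofNat, map_ofNat,
      div_eq_iff (by norm_num : (2:L) ≠ 0)]
    linear_combination -heq
  have hβdvd : minpoly E β ∣ (X ^ 2 - C ((((⟨α, hαE⟩ : E)) ^ 4 - 17) / 2)) := by
    apply minpoly.dvd
    rw [map_sub, map_pow, aeval_X, aeval_C, hβsq]
    simp
  have hβle : (minpoly E β).natDegree ≤ 2 := by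
    have := natDegree_le_of_dvd hβdvd (X_pow_sub_C_ne_zero (by norm_num) _)
    simpa [natDegree_X_pow_sub_C] using this
  have hβdeg1 : (minpoly E β).natDegree = 1 := by
    have hdvdrank : (minpoly E β).natDegree ∣ Module.finrank E L := by
      rw [← IntermediateField.adjoin.finrank hβint]
      exact ⟨Module.finrank E⟮β⟯ L, (Module.finrank_mul_finrank E E⟮β⟯ L).symm⟩
    obtain ⟨t, ht⟩ := hdvdrank
    have h2 := hoddE.2
    rw [ht, Nat.odd_mul] at h2
    have h3 := h2.1
    rw [Nat.odd_iff] at h3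
    omega
  obtain ⟨eβ, heβ⟩ := rational_of_minpoly_natDegree_one β hβint hβdeg1
  have hβE : β ∈ E := by
    rw [← heβ, IntermediateField.algebraMap_apply]
    exact SetLike.coe_mem _
  have hβadj : β ∈ Algebra.adjoin ℚ {α} := by
    rw [← IntermediateField.adjoin_simple_toSubalgebra_of_isAlgebraic hαint.isAlgebraic]
    exact hβE
  rw [Algebra.adjoin_singleton_eq_range_aeval] at hβadj
  obtain ⟨p₀, hp₀⟩ := hβadj
  have hdvd : minpoly ℚ α ∣ (X ^ 4 - C 17 - 2 * p₀ ^ 2) := by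
    apply minpoly.dvd
    have h1 : aeval α (X ^ 4 - C 17 - 2 * p₀ ^ 2)
        = α ^ 4 - 17 - 2 * (aeval α p₀) ^ 2 := by
      simp [map_sub, map_mul, map_pow, map_ofNat]
    have hp₀' : aeval α p₀ = β := hp₀
    rw [h1, hp₀']
    linear_combination -heq
  have hmdeg : (minpoly ℚ α).natDegree = Module.finrank ℚ E :=
    (IntermediateField.adjoin.finrank hαint).symm
  exact lemB (minpoly ℚ α).natDegree (hmdeg ▸ hoddE.1) (minpoly ℚ α) p₀
    (minpoly.monic hαint) rfl hdvd

/-- The Schinzel curve has no point in any number field of odd degree: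
over such a field `K`, the only solution of `x⁴ − 17z⁴ = 2(y² + 4z²)²` is trivial. -/
theorem schinzel_no_odd_degree_point (K : Type*) [Field K] [NumberField K]
    (hodd : Odd (Module.finrank ℚ K)) :
    ∀ x y z : K, x ^ 4 - 17 * z ^ 4 = 2 * (y ^ 2 + 4 * z ^ 2) ^ 2 →
      x = 0 ∧ y = 0 ∧ z = 0 := by
  intro x y z heq
  have hz : z = 0 := by
    by_contra hz
    refine lemA hodd (x / z) ((y ^ 2 + 4 * z ^ 2) / z ^ 2) ?_
    field_simp
    linear_combination -heq
  subst hz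
  have hy : y = 0 := by
    by_contra hy
    refine lemD hodd ((x / y) ^ 2) ?_
    field_simp
    linear_combination heq
  subst hy
  have hx : x = 0 := by
    have h4 : x ^ 4 = 0 := by linear_combination heq
    exact pow_eq_zero_iff (by norm_num : (4:ℕ) ≠ 0) |>.mp h4
  exact ⟨hx, rfl, rfl⟩
end
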